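/- Let Ω ⊆ ℝ^N be open, E a Banach space, and Λ as in the standing hypotheses, admitting a Λ-invariant exhaustion (Ωₙ). Let the kernel k satisfy conditions (k1) and (k2). Then for every w ∈ L¹_loc(Ω,E) the formula V(w)(x) := ∫_{Λ(x)} k(x,y) w(y) dy defines a continuous function V(w) : Ω → E. -/

import Mathlib

open MeasureTheory Set Filter Bornology

/-- Under the standing hypotheses on `Λ` (ρ-continuity, boundedness,
a Λ-invariant exhaustion) and the kernel conditions (k1)–(k2), for every
`w ∈ L¹_loc(Ω,E)` the Volterra integral `V(w)(x) := ∫_{Λ(x)} k(x,y) w(y) dy`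
defines a continuous function on `Ω`. -/
theorem stmt_8
    (N : ℕ) {E : Type*} [NormedAddCommGroup E] [NormedSpace ℝ E] [CompleteSpace E]
    (Ω : Set (Fin N → ℝ)) (hΩ : IsOpen Ω)
    (Λ : (Fin N → ℝ) → Set (Fin N → ℝ))
    (hΛsub : ∀ x ∈ Ω, Λ x ⊆ Ω)
    (hΛmeas : ∀ x ∈ Ω, MeasurableSet (Λ x))
    (hΛρ : ∀ x₀ ∈ Ω, Tendsto (fun x => volume (symmDiff (Λ x) (Λ x₀)))
      (nhdsWithin x₀ Ω) (nhds 0))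
    (hΛbdd : ∀ S ⊆ Ω, IsBounded S →
      IsCompact (closure (⋃ x ∈ S, Λ x)) ∧ closure (⋃ x ∈ S, Λ x) ⊆ Ω)
    -- a Λ-invariant exhaustion (Ωₙ)
    (Ωseq : ℕ → Set (Fin N → ℝ))
    (hOopen : ∀ n, IsOpen (Ωseq n)) (hObdd : ∀ n, IsBounded (Ωseq n))
    (hOsub : ∀ n, closure (Ωseq n) ⊆ Ω) (hOmono : ∀ n, Ωseq n ⊆ Ωseq (n + 1))
    (hOcover : Ω ⊆ ⋃ n, Ωseq n)
    (hOinv : ∀ n, ∀ x ∈ Ωseq n, Λ x ⊆ Ωseq n)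
    -- the kernel k with conditions (k1)-(k2)
    (k : (Fin N → ℝ) → (Fin N → ℝ) → (E →L[ℝ] E))
    (hk1 : ∀ x ∈ Ω, AEStronglyMeasurable (k x) (volume.restrict (Λ x)) ∧
      eLpNorm (k x) ⊤ (volume.restrict (Λ x)) < ⊤)
    (hk2 : ∀ C ⊆ Ω, IsCompact C → ∀ x₀ ∈ Ω,
      Tendsto (fun x => eLpNorm
          (fun y => (Λ x).indicator (k x) y - (Λ x₀).indicator (k x₀) y)
          ⊤ (volume.restrict C))
        (nhdsWithin x₀ Ω) (nhds 0)) :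
    -- conclusion: V(w) is continuous on Ω for every w ∈ L¹_loc(Ω,E)
    ∀ w : (Fin N → ℝ) → E, StronglyMeasurable w →
      (∀ K ⊆ Ω, IsCompact K → IntegrableOn w K) →
      ContinuousOn (fun x => ∫ y in Λ x, (k x y) (w y)) Ω := by
  intro w hw_meas hw_int x₀ hx₀
  -- choose an exhaustion set containing x₀
  obtain ⟨n, hx₀n⟩ : ∃ n, x₀ ∈ Ωseq n := mem_iUnion.1 (hOcover hx₀)
  set C : Set (Fin N → ℝ) := closure (Ωseq n) with hCdef
  have hCcomp : IsCompact C :=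
    Metric.isCompact_of_isClosed_isBounded isClosed_closure (hObdd n).closure
  have hCΩ : C ⊆ Ω := hOsub n
  have hwC : IntegrableOn w C := hw_int C hCΩ hCcomp
  -- integrability of the integrand on Λ x for each x ∈ Ω
  have key_int : ∀ x ∈ Ω, IntegrableOn (fun y => k x y (w y)) (Λ x) := by
    intro x hx
    have hb := hΛbdd {x} (by simpa using hx) isBounded_singleton
    simp only [mem_singleton_iff, iUnion_iUnion_eq_left] at hb
    have hwΛ : IntegrableOn w (Λ x) :=
      (hw_int _ hb.2 hb.1).mono_set subset_closure
    obtain ⟨hmeas, hfin⟩ := hk1 x hx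
    refine Integrable.mono'
      (g := fun y => (eLpNorm (k x) ⊤ (volume.restrict (Λ x))).toReal * ‖w y‖)
      (hwΛ.norm.const_mul _) ?_ ?_
    · exact (isBoundedBilinearMap_apply.continuous).comp_aestronglyMeasurable
        (hmeas.prodMk (hw_meas.aestronglyMeasurable (μ := volume.restrict (Λ x))))
    · filter_upwards [enorm_ae_le_eLpNormEssSup (k x) (volume.restrict (Λ x))]
        with y hy
      have h1 : ‖k x y (w y)‖ ≤ ‖k x y‖ * ‖w y‖ := (k x y).le_opNorm _
      have h2 : ‖k x y‖ ≤ (eLpNorm (k x) ⊤ (volume.restrict (Λ x))).toReal := by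
        rw [eLpNorm_exponent_top] at hfin ⊢
        have := ENNReal.toReal_mono hfin.ne hy
        simpa using this
      calc ‖k x y (w y)‖ ≤ ‖k x y‖ * ‖w y‖ := h1
        _ ≤ _ := mul_le_mul_of_nonneg_right h2 (norm_nonneg _)
  -- rewrite the integral over C for x with Λ x ⊆ C
  have key_eq : ∀ x ∈ Ω, Λ x ⊆ C →
      ∫ y in Λ x, k x y (w y) = ∫ y in C, ((Λ x).indicator (k x) y) (w y) := by
    intro x hx hsub
    have h1 : (fun y => ((Λ x).indicator (k x) y) (w y)) =
        (Λ x).indicator (fun y => k x y (w y)) := by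
      funext y
      by_cases hy : y ∈ Λ x <;> simp [Set.indicator_apply, hy]
    rw [h1, setIntegral_indicator (hΛmeas x hx), inter_eq_right.mpr hsub]
  -- integrability of the indicator integrand on C
  have key_intC : ∀ x ∈ Ω, Λ x ⊆ C →
      IntegrableOn (fun y => ((Λ x).indicator (k x) y) (w y)) C := by
    intro x hx hsub
    have h1 : (fun y => ((Λ x).indicator (k x) y) (w y)) =
        (Λ x).indicator (fun y => k x y (w y)) := by
      funext y
      by_cases hy : y ∈ Λ x <;> simp [Set.indicator_apply, hy]
    rw [IntegrableOn, h1, integrable_indicator_iff (hΛmeas x hx), IntegrableOn,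
      Measure.restrict_restrict (hΛmeas x hx), inter_eq_left.mpr hsub]
    exact key_int x hx
  -- the essential-sup quantity from (k2)
  set M : (Fin N → ℝ) → ENNReal := fun x => eLpNorm
      (fun y => (Λ x).indicator (k x) y - (Λ x₀).indicator (k x₀) y)
      ⊤ (volume.restrict C) with hMdef
  have hM : Tendsto M (nhdsWithin x₀ Ω) (nhds 0) := hk2 C hCΩ hCcomp x₀ hx₀
  have hΛx₀C : Λ x₀ ⊆ C := (hOinv n x₀ hx₀n).trans subset_closure
  set I : ℝ := ∫ y in C, ‖w y‖ with hIdef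
  -- the key bound, valid eventually
  have hbound : ∀ᶠ x in nhdsWithin x₀ Ω,
      ‖(∫ y in Λ x, k x y (w y)) - ∫ y in Λ x₀, k x₀ y (w y)‖ ≤ (M x).toReal * I := by
    have hev1 : ∀ᶠ x in nhdsWithin x₀ Ω, x ∈ Ωseq n :=
      eventually_nhdsWithin_of_eventually_nhds
        ((hOopen n).eventually_mem hx₀n)
    have hev2 : ∀ᶠ x in nhdsWithin x₀ Ω, x ∈ Ω := eventually_mem_nhdsWithin
    have hev3 : ∀ᶠ x in nhdsWithin x₀ Ω, M x < 1 :=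
      hM.eventually (gt_mem_nhds (by norm_num : (0 : ENNReal) < 1))
    filter_upwards [hev1, hev2, hev3] with x hxn hxΩ hMx
    have hΛxC : Λ x ⊆ C := (hOinv n x hxn).trans subset_closure
    rw [key_eq x hxΩ hΛxC, key_eq x₀ hx₀ hΛx₀C,
      ← integral_sub (key_intC x hxΩ hΛxC) (key_intC x₀ hx₀ hΛx₀C)]
    have hIx := key_intC x hxΩ hΛxC
    have hIx₀ := key_intC x₀ hx₀ hΛx₀C
    calc ‖∫ y in C, (((Λ x).indicator (k x) y) (w y) - ((Λ x₀).indicator (k x₀) y) (w y))‖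
        ≤ ∫ y in C, ‖((Λ x).indicator (k x) y) (w y) - ((Λ x₀).indicator (k x₀) y) (w y)‖ :=
          norm_integral_le_integral_norm _
      _ ≤ ∫ y in C, (M x).toReal * ‖w y‖ := by
          refine integral_mono_ae (hIx.sub hIx₀).norm (hwC.norm.const_mul _) ?_
          filter_upwards [enorm_ae_le_eLpNormEssSup
            (fun y => (Λ x).indicator (k x) y - (Λ x₀).indicator (k x₀) y)
            (volume.restrict C)] with y hy
          have h1 : ‖((Λ x).indicator (k x) y) (w y) - ((Λ x₀).indicator (k x₀) y) (w y)‖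
              = ‖((Λ x).indicator (k x) y - (Λ x₀).indicator (k x₀) y) (w y)‖ := by
            simp [ContinuousLinearMap.sub_apply]
          have h2 : ‖((Λ x).indicator (k x) y - (Λ x₀).indicator (k x₀) y) (w y)‖
              ≤ ‖(Λ x).indicator (k x) y - (Λ x₀).indicator (k x₀) y‖ * ‖w y‖ :=
            ContinuousLinearMap.le_opNorm _ _
          have h3 : ‖(Λ x).indicator (k x) y - (Λ x₀).indicator (k x₀) y‖ ≤ (M x).toReal := by
            have hfin : M x ≠ ⊤ := hMx.ne_top
            rw [hMdef] at hfin ⊢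
            simp only [eLpNorm_exponent_top] at hfin ⊢
            have := ENNReal.toReal_mono hfin hy
            simpa using this
          rw [h1]
          exact h2.trans (mul_le_mul_of_nonneg_right h3 (norm_nonneg _))
      _ = (M x).toReal * I := by rw [integral_const_mul]
  -- conclude via squeezing
  have htends : Tendsto (fun x => (M x).toReal * I) (nhdsWithin x₀ Ω) (nhds 0) := by
    have h0 : Tendsto (fun x => (M x).toReal) (nhdsWithin x₀ Ω) (nhds 0) := by
      have := (ENNReal.tendsto_toReal (by norm_num : (0 : ENNReal) ≠ ⊤)).comp hM
      simpa [Function.comp_def] using this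
    simpa using h0.mul_const I
  have : Tendsto (fun x => ∫ y in Λ x, k x y (w y)) (nhdsWithin x₀ Ω)
      (nhds (∫ y in Λ x₀, k x₀ y (w y))) := by
    rw [tendsto_iff_norm_sub_tendsto_zero]
    exact squeeze_zero' (Eventually.of_forall fun x => norm_nonneg _) hbound htends
  exact this
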